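/- In any swap equilibrium of a 2-type Swap Schelling Game on a cycle with at least two agents of each color, every agent has strictly positive utility; equivalently, every maximal monochromatic arc of the induced coloring has length at least 2. -/

import Mathlib

open SimpleGraph Finset
open scoped Classical

noncomputable def ssgUtil {V A : Type*} [Fintype V] [DecidableEq V]
    (G : SimpleGraph V) [DecidableRel G.Adj]
    {k : ℕ} (c : A → Fin k) (σ : A ≃ V) (i : A) : ℚ :=
  (((G.neighborFinset (σ i)).filter (fun v => c (σ.symm v) = c i)).card : ℚ) /
    (G.degree (σ i) : ℚ)

def ssgSwap {V A : Type*} [DecidableEq V] (σ : A ≃ V) (i j : A) : A ≃ V :=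
  σ.trans (Equiv.swap (σ i) (σ j))

def ssgProfitable {V A : Type*} [Fintype V] [DecidableEq V]
    (G : SimpleGraph V) [DecidableRel G.Adj]
    {k : ℕ} (c : A → Fin k) (σ : A ≃ V) (i j : A) : Prop :=
  c i ≠ c j ∧
    ssgUtil G c σ i < ssgUtil G c (ssgSwap σ i j) i ∧
    ssgUtil G c σ j < ssgUtil G c (ssgSwap σ i j) j

def ssgEquilibrium {V A : Type*} [Fintype V] [DecidableEq V]
    (G : SimpleGraph V) [DecidableRel G.Adj]
    {k : ℕ} (c : A → Fin k) (σ : A ≃ V) : Prop :=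
  ∀ i j : A, ¬ ssgProfitable G c σ i j

def ssgLocalEquilibrium {V A : Type*} [Fintype V] [DecidableEq V]
    (G : SimpleGraph V) [DecidableRel G.Adj]
    {k : ℕ} (c : A → Fin k) (σ : A ≃ V) : Prop :=
  ∀ i j : A, G.Adj (σ i) (σ j) → ¬ ssgProfitable G c σ i j

noncomputable def ssgWelfare {V A : Type*} [Fintype V] [DecidableEq V] [Fintype A]
    (G : SimpleGraph V) [DecidableRel G.Adj]
    {k : ℕ} (c : A → Fin k) (σ : A ≃ V) : ℚ :=
  ∑ i : A, ssgUtil G c σ i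

noncomputable def ssgPhi {V A : Type*} [Fintype V] [DecidableEq V]
    (G : SimpleGraph V) [DecidableRel G.Adj]
    {k : ℕ} (c : A → Fin k) (σ : A ≃ V) : ℕ :=
  (G.edgeFinset.filter (fun e => ∀ u ∈ e, ∀ v ∈ e, c (σ.symm u) = c (σ.symm v))).card


noncomputable instance (n : ℕ) : DecidableRel (SimpleGraph.cycleGraph n).Adj :=
  Classical.decRel _

open scoped Fin.CommRing

lemma ssg_one_ne_zero (m : ℕ) : (1 : Fin (m+3)) ≠ 0 := by
  simp [Fin.ext_iff]

lemma ssg_two_ne_zero (m : ℕ) : (2 : Fin (m+3)) ≠ 0 := by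
  have h2 : (2 : Fin (m+3)) = ((2:ℕ) : Fin (m+3)) := rfl
  have : ((2:Fin (m+3)) : ℕ) = 2 := by
    rw [h2, Fin.val_natCast]; exact Nat.mod_eq_of_lt (by omega)
  simp [Fin.ext_iff, this, Nat.mod_eq_of_lt (show 2 < m+3 by omega)]

lemma ssg_nbhd (m : ℕ) (v : Fin (m+3)) :
    (cycleGraph (m+3)).neighborFinset v = {v - 1, v + 1} := by
  ext w
  rw [mem_neighborFinset, Finset.mem_insert, Finset.mem_singleton]
  have h : (cycleGraph (m+3)).Adj v w ↔ v - w = 1 ∨ w - v = 1 := cycleGraph_adj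
  rw [h]
  constructor
  · rintro (h | h)
    · left; linear_combination -h
    · right; linear_combination h
  · rintro (rfl | rfl)
    · left; ring
    · right; ring

lemma ssg_sub_ne_add (m : ℕ) (v : Fin (m+3)) : v - 1 ≠ v + 1 := by
  intro h
  exact ssg_two_ne_zero m (by linear_combination -h)

lemma ssg_deg (m : ℕ) (v : Fin (m+3)) : (cycleGraph (m+3)).degree v = 2 := by
  rw [SimpleGraph.degree, ssg_nbhd, Finset.card_pair (ssg_sub_ne_add m v)]

lemma ssg_fin2 (p q r : Fin 2) (h1 : p ≠ r) (h2 : q ≠ r) : p = q := by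
  fin_cases p <;> fin_cases q <;> fin_cases r <;> simp_all

lemma ssg_walk (m : ℕ) (γ : Fin (m+3) → Fin 2) (a : Fin 2) (s w : Fin (m+3))
    (hw : γ w = a) (hws : w ≠ s)
    (hs1 : γ (s - 1) ≠ a) (hs2 : γ (s + 1) ≠ a) :
    ∃ x : Fin (m+3), x ≠ s ∧ γ x = a ∧ γ (x + 1) ≠ a := by
  have hex : ∃ k : ℕ, γ (w + (k : Fin (m+3))) ≠ a := by
    refine ⟨((s + 1) - w).val, ?_⟩
    rw [Fin.cast_val_eq_self]
    have : w + (s + 1 - w) = s + 1 := by ring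
    rw [this]; exact hs2
  set k := Nat.find hex with hk
  have hkP : γ (w + (k : Fin (m+3))) ≠ a := Nat.find_spec hex
  have hmin : ∀ j < k, γ (w + (j : Fin (m+3))) = a := fun j hj =>
    not_not.mp (Nat.find_min hex hj)
  have hk1 : 1 ≤ k := by
    by_contra h
    have h0 : k = 0 := by omega
    apply hkP
    rw [h0]
    simpa using hw
  refine ⟨w + ((k-1 : ℕ) : Fin (m+3)), ?_, hmin _ (by omega), ?_⟩
  · intro hxs
    rcases Nat.lt_or_ge k 2 with h2 | h2
    · have : k - 1 = 0 := by omega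
      rw [this] at hxs
      simp at hxs
      exact hws hxs
    · apply hs1
      have hc : ((k-1:ℕ) : Fin (m+3)) = ((k-2:ℕ) : Fin (m+3)) + 1 := by
        have hh : (k-1:ℕ) = (k-2)+1 := by omega
        rw [hh]
        push_cast
        ring
      have : s - 1 = w + ((k-2:ℕ) : Fin (m+3)) := by
        rw [← hxs, hc]; ring
      rw [this]
      exact hmin _ (by omega)
  · have : ((k-1:ℕ) : Fin (m+3)) + 1 = (k : Fin (m+3)) := by
      conv_rhs => rw [show k = (k-1)+1 by omega]
      push_cast
      ring
    rw [add_assoc, this]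
    exact hkP

theorem stmt14 (n o b : ℕ) (hn : 3 ≤ n)
    (c : Fin n → Fin 2)
    (ho : o = (Finset.univ.filter (fun i : Fin n => c i = 0)).card)
    (hb : b = (Finset.univ.filter (fun i : Fin n => c i = 1)).card)
    (ho2 : 2 ≤ o) (hb2 : 2 ≤ b)
    (σ : Fin n ≃ Fin n) (heq : ssgEquilibrium (SimpleGraph.cycleGraph n) c σ) :
    ∀ i : Fin n, 0 < ssgUtil (SimpleGraph.cycleGraph n) c σ i := by
  obtain ⟨m, rfl⟩ : ∃ m, n = m + 3 := ⟨n - 3, by omega⟩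
  intro i
  by_contra hpos
  set γ : Fin (m+3) → Fin 2 := fun v => c (σ.symm v) with hγ
  set s : Fin (m+3) := σ i with hs
  set a : Fin 2 := c i with ha
  -- utility formula
  have hutil : ∀ (τ : Fin (m+3) ≃ Fin (m+3)) (p : Fin (m+3)),
      ssgUtil (cycleGraph (m+3)) c τ p =
      (((({τ p - 1, τ p + 1} : Finset (Fin (m+3))).filter
          (fun v => c (τ.symm v) = c p)).card : ℚ)) / 2 := by
    intro τ p
    simp only [ssgUtil, ssg_nbhd, ssg_deg]
    norm_num
  -- agent i has zero utility
  have hge : 0 ≤ ssgUtil (cycleGraph (m+3)) c σ i := by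
    rw [hutil]; positivity
  have h0 : ssgUtil (cycleGraph (m+3)) c σ i = 0 := le_antisymm (not_lt.mp hpos) hge
  have hcard0 :
      (({s - 1, s + 1} : Finset (Fin (m+3))).filter (fun v => γ v = a)).card = 0 := by
    have h := h0
    rw [hutil] at h
    rw [div_eq_zero_iff] at h
    rcases h with h | h
    · exact_mod_cast h
    · norm_num at h
  have hempty : ∀ v ∈ ({s - 1, s + 1} : Finset (Fin (m+3))), γ v ≠ a := by
    intro v hv
    have := Finset.card_eq_zero.mp hcard0
    rw [Finset.filter_eq_empty_iff] at this
    exact this hv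
  have hs1 : γ (s - 1) ≠ a := hempty _ (by simp)
  have hs2 : γ (s + 1) ≠ a := hempty _ (by simp)
  -- count vertices of color a
  have himg : (Finset.univ.filter (fun v : Fin (m+3) => γ v = a)) =
      (Finset.univ.filter (fun j : Fin (m+3) => c j = a)).image σ := by
    ext v
    simp only [Finset.mem_filter, Finset.mem_image, Finset.mem_univ, true_and]
    constructor
    · intro h
      exact ⟨σ.symm v, h, by simp⟩
    · rintro ⟨j, hj, rfl⟩
      simpa [hγ] using hj
  have hcnt : 2 ≤ (Finset.univ.filter (fun v : Fin (m+3) => γ v = a)).card := by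
    rw [himg, Finset.card_image_of_injective _ σ.injective]
    have ha01 : a = 0 ∨ a = 1 := by
      rcases a with ⟨av, hv⟩
      interval_cases av
      · left; rfl
      · right; rfl
    rcases ha01 with h | h <;> rw [h] <;> omega
  have hsa : s ∈ Finset.univ.filter (fun v : Fin (m+3) => γ v = a) := by
    simp [hγ, hs, ha]
  obtain ⟨w, hwmem, hwne⟩ :=
    Finset.exists_mem_ne (lt_of_lt_of_le one_lt_two hcnt) s
  have hwa : γ w = a := (Finset.mem_filter.mp hwmem).2
  -- find boundary vertex x
  obtain ⟨x, hxs, hxa, hxa1⟩ := ssg_walk m γ a s w hwa hwne hs1 hs2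
  set y : Fin (m+3) := x + 1 with hy
  set j : Fin (m+3) := σ.symm y with hj
  have hσj : σ j = y := σ.apply_symm_apply y
  have hcj : c j = γ y := rfl
  have hcjne : c j ≠ a := hxa1
  have hxy : x ≠ y := by
    intro h
    exact ssg_one_ne_zero m (by linear_combination -h)
  have hysp1 : y ≠ s + 1 := by
    intro h
    apply hxs
    have := add_right_cancel (a := x) (b := (1 : Fin (m+3))) (c := s)
    exact this h
  have hγs : γ s = a := by simp [hγ, hs, ha]
  have hyne : y ≠ s := by
    intro h
    apply hcjne
    rw [hcj, h, hγs]
  -- the swap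
  set τ : Fin (m+3) ≃ Fin (m+3) := ssgSwap σ i j with hτ
  have hτi : τ i = y := by
    simp [hτ, ssgSwap, ← hs, hσj, Equiv.swap_apply_left]
  have hτj : τ j = s := by
    simp [hτ, ssgSwap, ← hs, hσj, Equiv.swap_apply_right]
  have hτsymm : ∀ v, c (τ.symm v) = γ (Equiv.swap s y v) := by
    intro v
    simp [hτ, ssgSwap, Equiv.symm_trans_apply, hγ, ← hs, hσj]
  -- i's utility improves
  have hiimp : ssgUtil (cycleGraph (m+3)) c σ i < ssgUtil (cycleGraph (m+3)) c τ i := by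
    rw [h0, hutil, hτi]
    apply div_pos _ (by norm_num)
    have hxmem : x ∈ ({y - 1, y + 1} : Finset (Fin (m+3))).filter
        (fun v => c (τ.symm v) = c i) := by
      rw [Finset.mem_filter]
      constructor
      · simp only [Finset.mem_insert, Finset.mem_singleton]
        left
        rw [hy]; ring
      · rw [hτsymm, Equiv.swap_apply_of_ne_of_ne hxs hxy]
        exact hxa
    have := Finset.card_pos.mpr ⟨x, hxmem⟩
    exact_mod_cast this
  -- j's utility improves
  have hsp1s : s + 1 ≠ s := by
    intro h
    exact ssg_one_ne_zero m (by linear_combination h)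
  have hsm1s : s - 1 ≠ s := by
    intro h
    exact ssg_one_ne_zero m (by linear_combination -h)
  have hjimp : ssgUtil (cycleGraph (m+3)) c σ j < ssgUtil (cycleGraph (m+3)) c τ j := by
    rw [hutil, hutil, hσj, hτj]
    by_cases hym : y = s - 1
    · -- old utility 0, new positive
      have hold : (({y - 1, y + 1} : Finset (Fin (m+3))).filter
          (fun v => c (σ.symm v) = c j)).card = 0 := by
        rw [Finset.card_eq_zero, Finset.filter_eq_empty_iff]
        intro v hv
        simp only [Finset.mem_insert, Finset.mem_singleton] at hv
        rcases hv with rfl | rfl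
        · have hyx : y - 1 = x := by rw [hy]; ring
          rw [show c (σ.symm (y - 1)) = γ (y - 1) from rfl, hyx, hxa]
          exact fun hcon => hcjne hcon.symm
        · have hys : y + 1 = s := by rw [hym]; ring
          rw [show c (σ.symm (y + 1)) = γ (y + 1) from rfl, hys, hγs]
          exact fun hcon => hcjne hcon.symm
      have hmem : s + 1 ∈ ({s - 1, s + 1} : Finset (Fin (m+3))).filter
          (fun v => c (τ.symm v) = c j) := by
        rw [Finset.mem_filter]
        refine ⟨by simp, ?_⟩
        rw [hτsymm, Equiv.swap_apply_of_ne_of_ne hsp1s (Ne.symm hysp1)]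
        exact (ssg_fin2 (γ (s+1)) (c j) a hs2 hcjne)
      have hcp : 0 < (({s - 1, s + 1} : Finset (Fin (m+3))).filter
          (fun v => c (τ.symm v) = c j)).card := Finset.card_pos.mpr ⟨s + 1, hmem⟩
      rw [hold]
      have h1 : (1:ℚ) ≤ ((({s - 1, s + 1} : Finset (Fin (m+3))).filter
          (fun v => c (τ.symm v) = c j)).card : ℚ) := by exact_mod_cast hcp
      push_cast
      linarith
    · -- old utility ≤ 1/2 < 1 = new
      have hnew : (({s - 1, s + 1} : Finset (Fin (m+3))).filter
          (fun v => c (τ.symm v) = c j)).card = 2 := by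
        rw [Finset.filter_eq_self.mpr, Finset.card_pair (ssg_sub_ne_add m s)]
        intro v hv
        simp only [Finset.mem_insert, Finset.mem_singleton] at hv
        rcases hv with rfl | rfl
        · rw [hτsymm, Equiv.swap_apply_of_ne_of_ne hsm1s (fun h => hym h.symm)]
          exact ssg_fin2 (γ (s-1)) (c j) a hs1 hcjne
        · rw [hτsymm, Equiv.swap_apply_of_ne_of_ne hsp1s (Ne.symm hysp1)]
          exact ssg_fin2 (γ (s+1)) (c j) a hs2 hcjne
      have hold : (({y - 1, y + 1} : Finset (Fin (m+3))).filter
          (fun v => c (σ.symm v) = c j)).card ≤ 1 := by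
        have hsub : (({y - 1, y + 1} : Finset (Fin (m+3))).filter
            (fun v => c (σ.symm v) = c j)) ⊆ {y + 1} := by
          intro v hv
          rw [Finset.mem_filter] at hv
          obtain ⟨hv1, hv2⟩ := hv
          simp only [Finset.mem_insert, Finset.mem_singleton] at hv1 ⊢
          rcases hv1 with rfl | rfl
          · exfalso
            have hyx : y - 1 = x := by rw [hy]; ring
            rw [hyx, show c (σ.symm x) = γ x from rfl, hxa] at hv2
            exact hcjne hv2.symm
          · rfl
        calc _ ≤ ({y+1} : Finset (Fin (m+3))).card := Finset.card_le_card hsub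
        _ = 1 := Finset.card_singleton _
      rw [hnew]
      have h1 : ((({y - 1, y + 1} : Finset (Fin (m+3))).filter
          (fun v => c (σ.symm v) = c j)).card : ℚ) ≤ 1 := by exact_mod_cast hold
      have : ((({y - 1, y + 1} : Finset (Fin (m+3))).filter
          (fun v => c (σ.symm v) = c j)).card : ℚ) / 2 ≤ 1 / 2 := by
        linarith
      calc _ ≤ (1:ℚ)/2 := this
      _ < (2:ℚ)/2 := by norm_num
  -- contradiction with equilibrium
  exact heq i j ⟨fun h => hcjne (h ▸ rfl), hiimp, hjimp⟩
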